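/- arXiv:2411.15935 — 2 statements merged into one kernel-verified Lean document; each statement's English description precedes it below -/
import Mathlib

section
/- Consider partially symmetric two-orthogonal decompositions in V = (ℝ^{m_1})^{⊗d_1} ⊗ ⋯ ⊗ (ℝ^{m_p})^{⊗d_p} ⊗ ℝ^{n_1} ⊗ ⋯ ⊗ ℝ^{n_q}, where p ≥ 1, q ≥ 1, each d_k ≥ 2, each m_k ≥ 2, and n_1 ≤ n_2 ≤ ⋯ ≤ n_q with each n_l ≥ 2. Then: (a) every such decomposition T = Σ_{i=1}^r ℓ_{1,i}^{⊗d_1} ⊗ ⋯ ⊗ ℓ_{p,i}^{⊗d_p} ⊗ u_{1,i} ⊗ ⋯ ⊗ u_{q,i} with nonzero summands, in which for all i ≠ j the total multiplicity of orthogonal factors Σ_{k : ⟨ℓ_{k,i}, ℓ_{k,j}⟩ = 0} d_k + |{ l : ⟨u_{l,i}, u_{l,j}⟩ = 0 }| is at least 2, has r ≤ m_1 ⋯ m_p · n_1 ⋯ n_{q−1}; and (b) there exists such a decomposition with exactly m_1 ⋯ m_p · n_1 ⋯ n_{q−1} nonzero summands. -/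
/-- Frobenius/Euclidean inner product of real arrays indexed by a finite type. -/
def fdot {ι : Type*} [Fintype ι] (u v : ι → ℝ) : ℝ := ∑ a, u a * v a

/-- The partially symmetric rank-one tensor
`x₁^{⊗d₁} ⊗ ⋯ ⊗ x_p^{⊗d_p} ⊗ u₁ ⊗ ⋯ ⊗ u_q` in
`(ℝ^{m₁})^{⊗d₁} ⊗ ⋯ ⊗ (ℝ^{m_p})^{⊗d_p} ⊗ ℝ^{n₁} ⊗ ⋯ ⊗ ℝ^{n_q}`, as an array. -/
def psProd {p q : ℕ} (d' : Fin p → ℕ) {m : Fin p → ℕ} {n : Fin q → ℕ}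
    (x : (k : Fin p) → Fin (m k) → ℝ) (u : (l : Fin q) → Fin (n l) → ℝ) :
    (((k : Fin p) → Fin (d' k) → Fin (m k)) × ((l : Fin q) → Fin (n l))) → ℝ :=
  fun a => (∏ k, ∏ s, x k (a.1 k s)) * ∏ l, u l (a.2 l)

open scoped Classical in
/-- The total multiplicity of orthogonal factors between two partially symmetric
rank-one tensors: `Σ_{k : ⟨x_k, x'_k⟩ = 0} d_k + #{ l : ⟨u_l, u'_l⟩ = 0 }`. -/
noncomputable def orthMult {p q : ℕ} (d' : Fin p → ℕ) {m : Fin p → ℕ} {n : Fin q → ℕ}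
    (x x' : (k : Fin p) → Fin (m k) → ℝ) (u u' : (l : Fin q) → Fin (n l) → ℝ) : ℕ :=
  (∑ k ∈ Finset.univ.filter (fun k => fdot (x k) (x' k) = 0), d' k) +
    (Finset.univ.filter (fun l => fdot (u l) (u' l) = 0)).card

open Finset

open Finset

/-- indicator (standard basis) vector with nat-valued index -/
def ev (ν s : ℕ) : Fin ν → ℝ := fun t => if (t : ℕ) = s then 1 else 0

lemma fdot_ev {ν : ℕ} {s s' : ℕ} (hs : s < ν) :
    fdot (ev ν s) (ev ν s') = if s = s' then 1 else 0 := by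
  unfold fdot ev
  rw [Finset.sum_eq_single (⟨s, hs⟩ : Fin ν)]
  · simp
  · intro b _ hb
    have : (b : ℕ) ≠ s := fun h => hb (Fin.ext h)
    simp [this]
  · simp

lemma fdot_self_pos {ι : Type*} [Fintype ι] {v : ι → ℝ} (h : v ≠ 0) : 0 < fdot v v := by
  obtain ⟨t, ht⟩ : ∃ t, v t ≠ 0 := by
    by_contra h'; push_neg at h'; exact h (funext h')
  exact Finset.sum_pos' (fun a _ => mul_self_nonneg _) ⟨t, Finset.mem_univ t, mul_self_pos.mpr ht⟩

lemma sum_prod_mul {ι : Type*} [Fintype ι] [DecidableEq ι] {κ : ι → Type*} [∀ i, Fintype (κ i)]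
    (f g : ∀ i, κ i → ℝ) :
    ∑ a : ∀ i, κ i, (∏ i, f i (a i)) * ∏ i, g i (a i) = ∏ i, ∑ t, f i t * g i t := by
  rw [Fintype.prod_sum]
  exact Finset.sum_congr rfl fun a _ => (Finset.prod_mul_distrib).symm

/-- the "reduced" tensor with one copy of each symmetric factor and last `u`-slot dropped -/
def QT {p q : ℕ} {m : Fin p → ℕ} {n : Fin q → ℕ} (lq : Fin q)
    (x : (k : Fin p) → Fin (m k) → ℝ) (u : (l : Fin q) → Fin (n l) → ℝ) :
    (((k : Fin p) → Fin (m k)) × ((l : {l : Fin q // l ≠ lq}) → Fin (n l.1))) → ℝ :=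
  fun a => (∏ k, x k (a.1 k)) * ∏ l, u l.1 (a.2 l)

lemma fdot_QT {p q : ℕ} {m : Fin p → ℕ} {n : Fin q → ℕ} (lq : Fin q)
    (x x' : (k : Fin p) → Fin (m k) → ℝ) (u u' : (l : Fin q) → Fin (n l) → ℝ) :
    fdot (QT lq x u) (QT lq x' u') =
      (∏ k, fdot (x k) (x' k)) * ∏ l : {l : Fin q // l ≠ lq}, fdot (u l.1) (u' l.1) := by
  unfold fdot QT
  rw [Fintype.sum_prod_type]
  have key : ∀ (a : (k : Fin p) → Fin (m k)) (b : (l : {l : Fin q // l ≠ lq}) → Fin (n l.1)),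
      ((∏ k, x k (a k)) * ∏ l, u l.1 (b l)) * ((∏ k, x' k (a k)) * ∏ l, u' l.1 (b l))
        = ((∏ k, x k (a k)) * ∏ k, x' k (a k)) * ((∏ l, u l.1 (b l)) * ∏ l, u' l.1 (b l)) := by
    intro a b; ring
  simp_rw [key]
  rw [← Finset.sum_mul_sum]
  congr 1
  · simpa [Finset.prod_mul_distrib] using
      sum_prod_mul (fun k (t : Fin (m k)) => x k t) (fun k t => x' k t)
  · simpa [Finset.prod_mul_distrib] using
      sum_prod_mul (fun (l : {l : Fin q // l ≠ lq}) (t : Fin (n l.1)) => u l.1 t)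
        (fun l t => u' l.1 t)

lemma two_le_card_filter {α : Type*} [Fintype α] [DecidableEq α] {P : α → Prop}
    [DecidablePred P] {a b : α} (hab : a ≠ b) (ha : P a) (hb : P b) :
    2 ≤ (Finset.univ.filter P).card := by
  have hsub : ({a, b} : Finset α) ⊆ Finset.univ.filter P := by
    intro t ht
    rcases Finset.mem_insert.mp ht with rfl | ht
    · exact Finset.mem_filter.mpr ⟨Finset.mem_univ _, ha⟩
    · rcases Finset.mem_singleton.mp ht with rfl
      exact Finset.mem_filter.mpr ⟨Finset.mem_univ _, hb⟩
  calc 2 = ({a, b} : Finset α).card := (Finset.card_pair hab).symm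
  _ ≤ _ := Finset.card_le_card hsub

abbrev IT (p q : ℕ) (m : Fin p → ℕ) (n : Fin q → ℕ) (lq : Fin q) : Type :=
  ((k : Fin p) → Fin (m k)) × ((l : {l : Fin q // l ≠ lq}) → Fin (n l.1))

/-- In `(ℝ^{m₁})^{⊗d₁} ⊗ ⋯ ⊗ (ℝ^{m_p})^{⊗d_p} ⊗ ℝ^{n₁} ⊗ ⋯ ⊗ ℝ^{n_q}` with all
`d_k ≥ 2` and `n₁ ≤ ⋯ ≤ n_q`, the maximal length of a partially symmetric
two-orthogonal decomposition is `N = m₁ ⋯ m_p · n₁ ⋯ n_{q−1}`: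
(a) every such decomposition has at most `N` summands, and
(b) there exists one with exactly `N` nonzero summands. -/
theorem stmt14 (p q : ℕ) (hp : 1 ≤ p) (hq : 1 ≤ q)
    (d' m : Fin p → ℕ) (hd : ∀ k, 2 ≤ d' k) (hm : ∀ k, 2 ≤ m k)
    (n : Fin q → ℕ) (hn : ∀ l, 2 ≤ n l) (hmono : Monotone n)
    (N : ℕ)
    (hN : N = (∏ k, m k) * ∏ l ∈ Finset.univ.erase (⟨q - 1, by omega⟩ : Fin q), n l) :
    (∀ (r : ℕ) (x : Fin r → (k : Fin p) → Fin (m k) → ℝ)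
        (u : Fin r → (l : Fin q) → Fin (n l) → ℝ),
      (∀ i, psProd d' (x i) (u i) ≠ 0) →
      (∀ i j : Fin r, i ≠ j → 2 ≤ orthMult d' (x i) (x j) (u i) (u j)) →
      r ≤ N)
    ∧
    (∃ (x : Fin N → (k : Fin p) → Fin (m k) → ℝ)
        (u : Fin N → (l : Fin q) → Fin (n l) → ℝ),
      (∀ i, psProd d' (x i) (u i) ≠ 0) ∧
      (∀ i j : Fin N, i ≠ j → 2 ≤ orthMult d' (x i) (x j) (u i) (u j))) := by
  classical
  set lq : Fin q := ⟨q - 1, by omega⟩ with hlq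
  have hM : 0 < n lq := by have := hn lq; omega
  have hcard : Fintype.card (IT p q m n lq) = N := by
    rw [hN, Fintype.card_prod, Fintype.card_pi, Fintype.card_pi]
    simp only [Fintype.card_fin]
    congr 1
    exact (Finset.prod_subtype (Finset.univ.erase lq)
      (by intro x; simp [Finset.mem_erase]) n).symm
  constructor
  · -- part (a)
    intro r x u hnz horth
    have hfac : ∀ i, (∀ k, x i k ≠ 0) ∧ (∀ l, u i l ≠ 0) := by
      intro i
      obtain ⟨a, ha⟩ : ∃ a, psProd d' (x i) (u i) a ≠ 0 := by
        by_contra h; push_neg at h; exact hnz i (funext h)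
      simp only [psProd] at ha
      have h1 := left_ne_zero_of_mul ha
      have h2 := right_ne_zero_of_mul ha
      constructor
      · intro k
        have hk := Finset.prod_ne_zero_iff.mp h1 k (Finset.mem_univ k)
        have hs := Finset.prod_ne_zero_iff.mp hk ⟨0, by have := hd k; omega⟩ (Finset.mem_univ _)
        intro h0; rw [h0] at hs; exact hs rfl
      · intro l
        have hl := Finset.prod_ne_zero_iff.mp h2 l (Finset.mem_univ l)
        intro h0; rw [h0] at hl; exact hl rfl
    let v : Fin r → EuclideanSpace ℝ (IT p q m n lq) := fun i => WithLp.toLp 2 (QT lq (x i) (u i))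
    have hinner : ∀ i j, (inner ℝ (v i) (v j) : ℝ) = fdot (QT lq (x i) (u i)) (QT lq (x j) (u j)) := by
      intro i j
      simp only [v, PiLp.inner_apply, PiLp.toLp_apply, RCLike.inner_apply', conj_trivial, fdot]
    have hvo : Pairwise fun i j => (inner ℝ (v i) (v j) : ℝ) = 0 := by
      intro i j hij
      rw [hinner, fdot_QT]
      have h2 := horth i j hij
      rw [orthMult] at h2
      by_cases hk : ∃ k, fdot (x i k) (x j k) = 0
      · obtain ⟨k, hk⟩ := hk
        rw [Finset.prod_eq_zero (Finset.mem_univ k) hk, zero_mul]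
      · push_neg at hk
        have hke : (Finset.univ.filter fun k => fdot (x i k) (x j k) = 0) = ∅ :=
          Finset.filter_eq_empty_iff.mpr (fun k _ => hk k)
        rw [hke, Finset.sum_empty, zero_add] at h2
        have hex : ∃ l, l ≠ lq ∧ fdot (u i l) (u j l) = 0 := by
          by_contra hl; push_neg at hl
          have hsub : (Finset.univ.filter fun l => fdot (u i l) (u j l) = 0) ⊆ {lq} := by
            intro l hlmem
            rw [Finset.mem_filter] at hlmem
            rw [Finset.mem_singleton]
            by_contra hne; exact (hl l hne) hlmem.2
          have := Finset.card_le_card hsub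
          rw [Finset.card_singleton] at this
          omega
        obtain ⟨l, hlne, hl0⟩ := hex
        rw [Finset.prod_eq_zero (Finset.mem_univ (⟨l, hlne⟩ : {l : Fin q // l ≠ lq})) hl0, mul_zero]
    have hvnz : ∀ i, v i ≠ 0 := by
      intro i hv0
      have hz : fdot (QT lq (x i) (u i)) (QT lq (x i) (u i)) = 0 := by
        rw [← hinner i i, hv0, inner_zero_left]
      rw [fdot_QT] at hz
      have hpos : 0 < (∏ k, fdot (x i k) (x i k)) *
          ∏ l : {l : Fin q // l ≠ lq}, fdot (u i l.1) (u i l.1) :=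
        mul_pos (Finset.prod_pos fun k _ => fdot_self_pos ((hfac i).1 k))
          (Finset.prod_pos fun l _ => fdot_self_pos ((hfac i).2 l.1))
      rw [hz] at hpos; exact lt_irrefl _ hpos
    have hli := linearIndependent_of_ne_zero_of_inner_eq_zero hvnz hvo
    have hle := hli.fintype_card_le_finrank
    rwa [Fintype.card_fin, finrank_euclideanSpace, hcard] at hle
  · -- part (b)
    let e : IT p q m n lq ≃ Fin N := Fintype.equivFinOfCardEq hcard
    let g : IT p q m n lq → ℕ := fun c => (∑ l : {l : Fin q // l ≠ lq}, ((c.2 l : ℕ))) % n lq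
    have hg : ∀ c, g c < n lq := fun c => Nat.mod_lt _ hM
    refine ⟨fun i k => ev (m k) ((e.symm i).1 k : ℕ),
            fun i l => if h : l = lq then ev (n l) (g (e.symm i))
              else ev (n l) (((e.symm i).2 ⟨l, h⟩ : ℕ)), ?_, ?_⟩
    · -- nonzero
      intro i hzero
      set c := e.symm i with hc
      have hpt := congrFun hzero
        ⟨fun k _ => c.1 k, fun l => if h : l = lq then ⟨g c, by rw [h]; exact hg c⟩
          else c.2 ⟨l, h⟩⟩
      simp only [psProd, Pi.zero_apply] at hpt
      rcases mul_eq_zero.mp hpt with h1 | h2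
      · obtain ⟨k, -, hk⟩ := Finset.prod_eq_zero_iff.mp h1
        obtain ⟨s, -, hs⟩ := Finset.prod_eq_zero_iff.mp hk
        simp [ev, hc] at hs
      · obtain ⟨l, -, hl⟩ := Finset.prod_eq_zero_iff.mp h2
        by_cases h : l = lq
        · subst h; rw [dif_pos rfl, dif_pos rfl] at hl; simp [ev, hc] at hl
        · rw [dif_neg h, dif_neg h] at hl; simp [ev, hc] at hl
    · -- two-orthogonality
      intro i j hij
      set c := e.symm i with hci
      set c' := e.symm j with hcj
      have hcc : c ≠ c' := fun h => hij (e.symm.injective h)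
      rw [orthMult]
      by_cases hk : ∃ k, c.1 k ≠ c'.1 k
      · obtain ⟨k, hk⟩ := hk
        refine le_trans (le_trans (hd k)
          (Finset.single_le_sum (f := d') (fun _ _ => Nat.zero_le _) ?_)) (Nat.le_add_right _ _)
        refine Finset.mem_filter.mpr ⟨Finset.mem_univ k, ?_⟩
        show fdot (ev (m k) ((c.1 k : ℕ))) (ev (m k) ((c'.1 k : ℕ))) = 0
        rw [fdot_ev (c.1 k).isLt]
        exact if_neg (fun h => hk (Fin.ext h))
      · push_neg at hk
        have hx1 : c.1 = c'.1 := funext hk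
        have hc2 : c.2 ≠ c'.2 := fun h => hcc (Prod.ext hx1 h)
        set S := (Finset.univ.filter fun l : {l : Fin q // l ≠ lq} => c.2 l ≠ c'.2 l) with hS
        have hSne : S.Nonempty := by
          obtain ⟨l, hl⟩ : ∃ l, c.2 l ≠ c'.2 l := by
            by_contra h; push_neg at h; exact hc2 (funext h)
          exact ⟨l, Finset.mem_filter.mpr ⟨Finset.mem_univ _, hl⟩⟩
        -- membership helper for non-last slots
        have hmem : ∀ l : {l : Fin q // l ≠ lq}, c.2 l ≠ c'.2 l →
            fdot ((fun i l => if h : l = lq then ev (n l) (g (e.symm i))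
              else ev (n l) (((e.symm i).2 ⟨l, h⟩ : ℕ))) i l.1)
              ((fun i l => if h : l = lq then ev (n l) (g (e.symm i))
              else ev (n l) (((e.symm i).2 ⟨l, h⟩ : ℕ))) j l.1) = 0 := by
          intro l hl
          show fdot (if h : l.1 = lq then _ else _) (if h : l.1 = lq then _ else _) = 0
          rw [dif_neg l.2, dif_neg l.2, ← hci, ← hcj]
          rw [fdot_ev (c.2 ⟨l.1, l.2⟩).isLt]
          refine if_neg (fun h => hl ?_)
          exact Fin.ext h
        rcases lt_or_ge 1 S.card with hS2 | hS1
        · obtain ⟨a, haS, b, hbS, hab⟩ := Finset.one_lt_card.mp hS2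
          have ha := (Finset.mem_filter.mp haS).2
          have hb := (Finset.mem_filter.mp hbS).2
          refine le_trans (two_le_card_filter (a := a.1) (b := b.1)
            (fun h => hab (Subtype.ext h)) ?_ ?_) (Nat.le_add_left _ _)
          · exact hmem a ha
          · exact hmem b hb
        · have hS1' : S.card = 1 := le_antisymm hS1 (Finset.card_pos.mpr hSne)
          obtain ⟨l₀, hS0⟩ := Finset.card_eq_one.mp hS1'
          have hl₀ : c.2 l₀ ≠ c'.2 l₀ := by
            have : l₀ ∈ S := hS0 ▸ Finset.mem_singleton_self l₀
            exact (Finset.mem_filter.mp this).2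
          have hrest : ∀ l : {l : Fin q // l ≠ lq}, l ≠ l₀ → c.2 l = c'.2 l := by
            intro l hl
            by_contra hne
            have : l ∈ S := Finset.mem_filter.mpr ⟨Finset.mem_univ _, hne⟩
            rw [hS0, Finset.mem_singleton] at this
            exact hl this
          have hgg : g c ≠ g c' := by
            have hA : ∑ l ∈ Finset.univ.erase l₀, ((c.2 l : ℕ)) =
                ∑ l ∈ Finset.univ.erase l₀, ((c'.2 l : ℕ)) :=
              Finset.sum_congr rfl fun l hl => by
                rw [hrest l (Finset.ne_of_mem_erase hl)]
            have hsum : ∀ z : (l : {l : Fin q // l ≠ lq}) → Fin (n l.1),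
                ∑ l, ((z l : ℕ)) = (∑ l ∈ Finset.univ.erase l₀, ((z l : ℕ))) + (z l₀ : ℕ) :=
              fun z => (Finset.sum_erase_add _ _ (Finset.mem_univ l₀)).symm
            intro h
            simp only [g, hsum, hA] at h
            have hmodeq : ((c.2 l₀ : ℕ)) ≡ ((c'.2 l₀ : ℕ)) [MOD n lq] :=
              Nat.ModEq.add_left_cancel' _ h
            have hle : n l₀.1 ≤ n lq := hmono (by
              rw [Fin.le_def]; exact Nat.le_sub_one_of_lt l₀.1.isLt)
            have h1 : ((c.2 l₀ : ℕ)) < n lq := lt_of_lt_of_le (c.2 l₀).isLt hle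
            have h2 : ((c'.2 l₀ : ℕ)) < n lq := lt_of_lt_of_le (c'.2 l₀).isLt hle
            have := hmodeq
            unfold Nat.ModEq at this
            rw [Nat.mod_eq_of_lt h1, Nat.mod_eq_of_lt h2] at this
            exact hl₀ (Fin.ext this)
          refine le_trans (two_le_card_filter (a := l₀.1) (b := lq) l₀.2 ?_ ?_)
            (Nat.le_add_left _ _)
          · exact hmem l₀ hl₀
          · show fdot (if h : lq = lq then _ else _) (if h : lq = lq then _ else _) = 0
            rw [dif_pos rfl, dif_pos rfl, ← hci, ← hcj]
            rw [fdot_ev (hg c)]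
            exact if_neg hgg
end

section
/- Let p ≥ 1, d_1,…,d_p ≥ 2, and let ℓ_k, y_k ∈ ℝ^{m_k} be nonzero vectors for k = 1,…,p. For each k and each ℓ ∈ ℝ^{m_k}, let τ_{k,ℓ} = Σ_{m=1}^{d_k} ℓ_1^{⊗d_1} ⊗ ⋯ ⊗ (ℓ_k^{⊗(m−1)} ⊗ ℓ ⊗ ℓ_k^{⊗(d_k−m)}) ⊗ ⋯ ⊗ ℓ_p^{⊗d_p} be the corresponding tangent vector to the Segre–Veronese cone at x = ℓ_1^{⊗d_1} ⊗ ⋯ ⊗ ℓ_p^{⊗d_p}. Then the rank-one tensor y = y_1^{⊗d_1} ⊗ ⋯ ⊗ y_p^{⊗d_p} satisfies ⟨y, τ_{k,ℓ}⟩ = 0 for all k ∈ {1,…,p} and all ℓ ∈ ℝ^{m_k} if and only if there exists k with ⟨ℓ_k, y_k⟩ = 0. -/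
/-- The rank-one tensor `ℓ₁^{⊗d₁} ⊗ ⋯ ⊗ ℓ_p^{⊗d_p}` in
`(ℝ^{m₁})^{⊗d₁} ⊗ ⋯ ⊗ (ℝ^{m_p})^{⊗d_p}`, as an array. -/
def svProd {p : ℕ} (d' : Fin p → ℕ) {m : Fin p → ℕ}
    (x : (k : Fin p) → Fin (m k) → ℝ) :
    ((k : Fin p) → Fin (d' k) → Fin (m k)) → ℝ :=
  fun a => ∏ k, ∏ s, x k (a k s)

/-- The tangent vector `τ_{k,v} = Σ_{m=1}^{d_k} ℓ₁^{⊗d₁} ⊗ ⋯ ⊗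
(ℓ_k^{⊗(m−1)} ⊗ v ⊗ ℓ_k^{⊗(d_k−m)}) ⊗ ⋯ ⊗ ℓ_p^{⊗d_p}` to the Segre–Veronese
cone at `ℓ₁^{⊗d₁} ⊗ ⋯ ⊗ ℓ_p^{⊗d_p}`, as an array. -/
def svTangent {p : ℕ} (d' : Fin p → ℕ) {m : Fin p → ℕ}
    (x : (k : Fin p) → Fin (m k) → ℝ) (k : Fin p) (v : Fin (m k) → ℝ) :
    ((k : Fin p) → Fin (d' k) → Fin (m k)) → ℝ :=
  fun a => (∑ s : Fin (d' k), v (a k s) * ∏ s' ∈ Finset.univ.erase s, x k (a k s'))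
      * ∏ k' ∈ Finset.univ.erase k, ∏ s, x k' (a k' s)


lemma sum_pi_prod {ι : Type*} [Fintype ι] [DecidableEq ι] {δ : ι → Type*} [∀ i, Fintype (δ i)]
    (f : (i : ι) → δ i → ℝ) :
    ∑ a : (i : ι) → δ i, ∏ i, f i (a i) = ∏ i, ∑ b, f i b := by
  rw [Finset.prod_univ_sum, Fintype.piFinset_univ]

lemma sum_pi_prod' {p : ℕ} (d' m : Fin p → ℕ) (g : (k : Fin p) → (Fin (d' k) → Fin (m k)) → ℝ) :
    ∑ a : ((k : Fin p) → Fin (d' k) → Fin (m k)), ∏ k, g k (a k) = ∏ k, ∑ b, g k b :=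
  sum_pi_prod g

lemma sum_prod_prod {p : ℕ} (d' m : Fin p → ℕ)
    (W : (k : Fin p) → Fin (d' k) → Fin (m k) → ℝ)
    (y : (k : Fin p) → Fin (m k) → ℝ) :
    ∑ a : ((k : Fin p) → Fin (d' k) → Fin (m k)), ∏ k, ∏ s, (W k s (a k s) * y k (a k s))
    = ∏ k, ∏ s, fdot (W k s) (y k) := by
  have h1 := sum_pi_prod' d' m (fun k b => ∏ s, W k s (b s) * y k (b s))
  rw [h1]
  refine Finset.prod_congr rfl fun k _ => ?_
  exact sum_pi_prod (fun s i => W k s i * y k i)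

lemma prod_comp_update {ι : Type*} [Fintype ι] [DecidableEq ι] {β : ι → Type*}
    (c : (i : ι) → β i) (i₀ : ι) (x : β i₀) (G : (i : ι) → β i → ℝ) :
    ∏ i, G i (Function.update c i₀ x i)
      = G i₀ x * ∏ i ∈ Finset.univ.erase i₀, G i (c i) := by
  rw [← Finset.mul_prod_erase _ _ (Finset.mem_univ i₀), Function.update_self]
  exact congrArg _ (Finset.prod_congr rfl fun i hi => by
    rw [Function.update_of_ne (Finset.ne_of_mem_erase hi)])

lemma key {p : ℕ} (d' m : Fin p → ℕ) (l y : (k : Fin p) → Fin (m k) → ℝ)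
    (k₀ : Fin p) (v : Fin (m k₀) → ℝ) :
    fdot (svProd d' y) (svTangent d' l k₀ v)
    = (d' k₀ : ℝ) * (fdot v (y k₀) * (fdot (l k₀) (y k₀)) ^ (d' k₀ - 1)
        * ∏ k ∈ Finset.univ.erase k₀, (fdot (l k) (y k)) ^ (d' k)) := by
  classical
  set W : Fin (d' k₀) → (k : Fin p) → Fin (d' k) → Fin (m k) → ℝ :=
    fun s₀ => Function.update (fun k (_ : Fin (d' k)) => l k) k₀
      (Function.update (fun _ : Fin (d' k₀) => l k₀) s₀ v) with hW
  have hWprod : ∀ (s₀ : Fin (d' k₀)) (G : (k : Fin p) → (Fin (d' k) → Fin (m k) → ℝ) → ℝ),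
      ∏ k, G k (W s₀ k) = G k₀ (Function.update (fun _ : Fin (d' k₀) => l k₀) s₀ v)
        * ∏ k ∈ Finset.univ.erase k₀, G k (fun _ => l k) := by
    intro s₀ G
    exact prod_comp_update (fun k (_ : Fin (d' k)) => l k) k₀ _ G
  have step1 : fdot (svProd d' y) (svTangent d' l k₀ v)
      = ∑ s₀ : Fin (d' k₀),
          ∑ a : ((k : Fin p) → Fin (d' k) → Fin (m k)),
            ∏ k, ∏ s, (W s₀ k s (a k s) * y k (a k s)) := by
    rw [Finset.sum_comm]
    unfold fdot svProd svTangent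
    refine Finset.sum_congr rfl fun a _ => ?_
    have inner : ∀ s₀ : Fin (d' k₀),
        ∏ k, ∏ s, (W s₀ k s (a k s) * y k (a k s))
        = ((v (a k₀ s₀) * ∏ s' ∈ Finset.univ.erase s₀, l k₀ (a k₀ s'))
            * ∏ k' ∈ Finset.univ.erase k₀, ∏ s, l k' (a k' s))
          * ∏ k, ∏ s, y k (a k s) := by
      intro s₀
      simp only [Finset.prod_mul_distrib]
      congr 1
      have h2 := hWprod s₀ (fun k u => ∏ s, u s (a k s))
      simp only at h2
      rw [h2]
      congr 1
      exact prod_comp_update (fun _ : Fin (d' k₀) => l k₀) s₀ v (fun s i => i (a k₀ s))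
    rw [Finset.sum_congr rfl fun s₀ _ => inner s₀, ← Finset.sum_mul, ← Finset.sum_mul]
    ring
  rw [step1]
  have step2 : ∀ s₀ : Fin (d' k₀),
      (∑ a : ((k : Fin p) → Fin (d' k) → Fin (m k)),
        ∏ k, ∏ s, (W s₀ k s (a k s) * y k (a k s)))
      = fdot v (y k₀) * (fdot (l k₀) (y k₀)) ^ (d' k₀ - 1)
        * ∏ k ∈ Finset.univ.erase k₀, (fdot (l k) (y k)) ^ (d' k) := by
    intro s₀
    rw [sum_prod_prod d' m (W s₀) y]
    have h3 := hWprod s₀ (fun k u => ∏ s, fdot (u s) (y k))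
    simp only at h3
    rw [h3]
    have h4 := prod_comp_update (fun _ : Fin (d' k₀) => l k₀) s₀ v
      (fun _ u => fdot u (y k₀))
    rw [h4, Finset.prod_const,
      Finset.card_erase_of_mem (Finset.mem_univ s₀), Finset.card_univ, Fintype.card_fin]
    congr 1
    exact Finset.prod_congr rfl fun k _ => by
      rw [Finset.prod_const, Finset.card_univ, Fintype.card_fin]
  rw [Finset.sum_congr rfl fun s₀ _ => step2 s₀, Finset.sum_const, Finset.card_univ,
    Fintype.card_fin, nsmul_eq_mul]

lemma fdot_self_ne {ι : Type*} [Fintype ι] {v : ι → ℝ} (h : v ≠ 0) : fdot v v ≠ 0 := by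
  intro h0
  refine h (funext fun a => ?_)
  have := (Finset.sum_eq_zero_iff_of_nonneg
    (fun a _ => mul_self_nonneg (v a))).mp h0 a (Finset.mem_univ a)
  exact mul_self_eq_zero.mp this

/-- For nonzero vectors `ℓ_k, y_k` and degrees `d_k ≥ 2`, the rank-one tensor
`y = y₁^{⊗d₁} ⊗ ⋯ ⊗ y_p^{⊗d_p}` is orthogonal to all tangent vectors `τ_{k,v}`
at `x = ℓ₁^{⊗d₁} ⊗ ⋯ ⊗ ℓ_p^{⊗d_p}` if and only if `⟨ℓ_k, y_k⟩ = 0` for some `k`. -/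
theorem stmt15 (p : ℕ) (hp : 1 ≤ p) (d' m : Fin p → ℕ) (hd : ∀ k, 2 ≤ d' k)
    (l y : (k : Fin p) → Fin (m k) → ℝ)
    (hl : ∀ k, l k ≠ 0) (hy : ∀ k, y k ≠ 0) :
    (∀ (k : Fin p) (v : Fin (m k) → ℝ), fdot (svProd d' y) (svTangent d' l k v) = 0)
    ↔ (∃ k : Fin p, fdot (l k) (y k) = 0) := by
  constructor
  · intro H
    by_contra hc
    push_neg at hc
    set k₀ : Fin p := ⟨0, hp⟩
    have h0 := H k₀ (y k₀)
    rw [key] at h0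
    have h1 : (d' k₀ : ℝ) ≠ 0 := by
      have := hd k₀; positivity
    have h2 : fdot (y k₀) (y k₀) ≠ 0 := fdot_self_ne (hy k₀)
    have h3 : (fdot (l k₀) (y k₀)) ^ (d' k₀ - 1) ≠ 0 := pow_ne_zero _ (hc k₀)
    have h4 : (∏ k ∈ Finset.univ.erase k₀, (fdot (l k) (y k)) ^ (d' k)) ≠ 0 :=
      Finset.prod_ne_zero_iff.mpr fun k _ => pow_ne_zero _ (hc k)
    exact (mul_ne_zero h1 (mul_ne_zero (mul_ne_zero h2 h3) h4)) h0
  · rintro ⟨k₁, hk₁⟩ k v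
    rw [key]
    by_cases h : k = k₁
    · subst h
      rw [hk₁, zero_pow (by have := hd k; omega : d' k - 1 ≠ 0)]
      ring
    · rw [Finset.prod_eq_zero (Finset.mem_erase.mpr ⟨Ne.symm h, Finset.mem_univ k₁⟩)
        (by rw [hk₁, zero_pow (by have := hd k₁; omega : d' k₁ ≠ 0)])]
      ring
end
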